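/- arXiv:1705.00324 — 2 statements merged into one kernel-verified Lean document; each statement's English description precedes it below -/
import Mathlib

section
/- Let g : (0,1) → ℝ be the function that maps a real number x = 0.b₁b₂b₃… (in its binary expansion not ending in all 1's) to g(x) = 0.b₁0b₂0b₃0… (interleaving the binary digits of x with zeros). Then g is discontinuous at every dyadic rational m/2ⁿ with 0 < m < 2ⁿ; in particular, the set of discontinuities of g is dense in (0,1). -/
/-- The `i`-th digit (`i ≥ 1`) of the canonical binary expansion of `x ∈ [0,1)`
(the expansion not ending in an infinite tail of 1's). -/
noncomputable def binDigit (x : ℝ) (i : ℕ) : ℕ := ⌊x * 2 ^ i⌋.toNat % 2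

/-- The interleaving function `g(0.b₁b₂b₃…) = 0.b₁0b₂0b₃0…`. -/
noncomputable def interleaveZeros (x : ℝ) : ℝ :=
  ∑' i : ℕ, (binDigit x (i + 1) : ℝ) / 2 ^ (2 * i + 1)

lemma binDigit_nat_div (a b : ℕ) (i : ℕ) :
    binDigit ((a:ℝ)/b) i = (a * 2^i / b) % 2 := by
  unfold binDigit
  rw [Int.floor_toNat, div_mul_eq_mul_div,
    show ((a:ℝ) * 2^i) = ((a * 2^i : ℕ) : ℝ) by push_cast; ring,
    Nat.floor_div_natCast, Nat.floor_natCast]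

lemma binDigit_nat_div' (a b : ℕ) (i : ℕ) :
    binDigit ((a:ℝ)/2^b) i = (a * 2^i / 2^b) % 2 := by
  have := binDigit_nat_div a (2^b) i
  rwa [Nat.cast_pow, Nat.cast_ofNat] at this

lemma binDigit_le_one (x : ℝ) (i : ℕ) : binDigit x i ≤ 1 := by
  unfold binDigit; omega

lemma term_eq (i : ℕ) : (1:ℝ)/2^(2*i+1) = (1/2)*(1/4)^i := by
  rw [pow_add, pow_mul, one_div_pow]
  norm_num

lemma summable_digits (x : ℝ) :
    Summable (fun i : ℕ => (binDigit x (i+1) : ℝ) / 2^(2*i+1)) := by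
  have hs : Summable (fun i : ℕ => (1/2:ℝ)*(1/4)^i) :=
    (summable_geometric_of_lt_one (by norm_num) (by norm_num)).mul_left _
  refine Summable.of_nonneg_of_le (fun i => by positivity) (fun i => ?_) hs
  rw [← term_eq]
  have h1 : (binDigit x (i+1) : ℝ) ≤ 1 := by exact_mod_cast binDigit_le_one x (i+1)
  have h2 : (0:ℝ) < 2^(2*i+1) := by positivity
  gcongr

lemma natA (A B : ℕ) (hA : 1 ≤ A) (hB : 1 ≤ B) : (A*B - 1)/B = A - 1 := by
  have h1 : A*B = (A-1)*B + B := by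
    have := Nat.sub_one_mul A B
    have hBA : B ≤ A*B := Nat.le_mul_of_pos_left B hA
    omega
  have h2 : A*B - 1 = (B-1) + (A-1)*B := by omega
  rw [h2, Nat.add_mul_div_right _ _ hB, Nat.div_eq_of_lt (by omega), Nat.zero_add]

lemma natB (m c e : ℕ) (hm : m % 2 = 1) (he : 1 ≤ e) :
    (m * 2^c - 1) / (2^c * 2^e) = m / 2^e := by
  have hr : m % 2^e % 2 = 1 := by
    rw [Nat.mod_mod_of_dvd _ (dvd_pow_self 2 (by omega))]; exact hm
  have hr1 : 1 ≤ m % 2^e := by omega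
  have hrlt : m % 2^e < 2^e := Nat.mod_lt _ (Nat.pow_pos (by norm_num))
  have hmpos : 0 < m := by omega
  have hsplit : m = 2^e * (m / 2^e) + m % 2^e := (Nat.div_add_mod m (2^e)).symm
  have key : m * 2^c - 1 = (m % 2^e * 2^c - 1) + (m / 2^e) * (2^c * 2^e) := by
    have h1 : m * 2^c = 2^e * (m / 2^e) * 2^c + m % 2^e * 2^c := by
      rw [← Nat.add_mul, ← hsplit]
    have h2 : 2^e * (m / 2^e) * 2^c = (m / 2^e) * (2^c * 2^e) := by ring
    have h3 : 1 ≤ m % 2^e * 2^c := Nat.one_le_iff_ne_zero.2 (by positivity)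
    have h4 : m * 2^c = (m / 2^e) * (2^c * 2^e) + m % 2^e * 2^c := by rw [← h2, h1]
    generalize m % 2^e * 2^c = A at h3 h4 ⊢
    generalize (m / 2^e) * (2^c * 2^e) = B at h4 ⊢
    generalize m * 2^c = C at h4 ⊢
    omega
  rw [key, Nat.add_mul_div_right _ _ (by positivity), Nat.div_eq_of_lt, Nat.zero_add]
  calc m % 2^e * 2^c - 1 < m % 2^e * 2^c :=
        Nat.sub_lt (Nat.mul_pos (by omega) (by positivity)) one_pos
    _ ≤ 2^e * 2^c := Nat.mul_le_mul_right _ (by omega)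
    _ = 2^c * 2^e := by ring

lemma mul_pow_div_le (a c j : ℕ) (h : j ≤ c) : a * 2^j / 2^c = a / 2^(c-j) := by
  have : (2:ℕ)^c = 2^(c-j) * 2^j := by rw [← pow_add]; congr 1; omega
  rw [this, Nat.mul_div_mul_right _ _ (by positivity)]

lemma mul_pow_div_ge (a c j : ℕ) (h : c ≤ j) : a * 2^j / 2^c = a * 2^(j-c) := by
  have : a * 2^j = a * 2^(j-c) * 2^c := by rw [mul_assoc, ← pow_add]; congr 2; omega
  rw [this, Nat.mul_div_cancel _ (by positivity)]

section digits
variable (m n k : ℕ) (hm : m % 2 = 1) (h1 : m < 2^n) (hnk : n < k)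

-- digits of x = m/2^n
lemma dx_lt (j : ℕ) (hj : j < n) :
    binDigit ((m:ℝ)/2^n) j = (m / 2^(n-j)) % 2 := by
  rw [binDigit_nat_div', mul_pow_div_le _ _ _ (le_of_lt hj)]

include hm in
lemma dx_eqn : binDigit ((m:ℝ)/2^n) n = 1 := by
  rw [binDigit_nat_div', Nat.mul_div_cancel _ (by positivity)]
  exact hm

lemma dx_gt (j : ℕ) (hj : n < j) : binDigit ((m:ℝ)/2^n) j = 0 := by
  rw [binDigit_nat_div', mul_pow_div_ge _ _ _ (le_of_lt hj)]
  have : (2:ℕ) ∣ m * 2^(j-n) := Dvd.dvd.mul_left (dvd_pow_self 2 (by omega)) m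
  omega

-- digits of y = M/2^k, M = m*2^(k-n) - 1
include hm hnk in
lemma dy_lt (j : ℕ) (hj : j < n) :
    binDigit (((m * 2^(k-n) - 1 : ℕ) : ℝ)/2^k) j = (m / 2^(n-j)) % 2 := by
  rw [binDigit_nat_div', mul_pow_div_le _ _ _ (by omega : j ≤ k)]
  have h2 : (2:ℕ)^(k-j) = 2^(k-n) * 2^(n-j) := by rw [← pow_add]; congr 1; omega
  rw [h2, natB m (k-n) (n-j) hm (by omega)]

include hm hnk in
lemma dy_eqn : binDigit (((m * 2^(k-n) - 1 : ℕ) : ℝ)/2^k) n = 0 := by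
  rw [binDigit_nat_div', mul_pow_div_le _ _ _ (le_of_lt hnk),
    natA m (2^(k-n)) (by omega) (Nat.one_le_two_pow)]
  omega

include hm in
lemma dy_mid (j : ℕ) (hj : n < j) (hjk : j ≤ k) :
    binDigit (((m * 2^(k-n) - 1 : ℕ) : ℝ)/2^k) j = 1 := by
  rw [binDigit_nat_div', mul_pow_div_le _ _ _ hjk]
  have hsplit : m * 2^(k-n) = (m * 2^(j-n)) * 2^(k-j) := by
    rw [mul_assoc, ← pow_add]; congr 2; omega
  have hpos : 0 < m * 2^(j-n) := Nat.mul_pos (by omega) (by positivity)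
  rw [hsplit, natA (m * 2^(j-n)) (2^(k-j)) hpos (Nat.one_le_two_pow)]
  have hdvd : (2:ℕ) ∣ m * 2^(j-n) := Dvd.dvd.mul_left (dvd_pow_self 2 (by omega)) m
  have hge : 2 ≤ m * 2^(j-n) := by omega
  omega

lemma dy_gt (j : ℕ) (hj : k < j) :
    binDigit (((m * 2^(k-n) - 1 : ℕ) : ℝ)/2^k) j = 0 := by
  rw [binDigit_nat_div', mul_pow_div_ge _ _ _ (le_of_lt hj)]
  have hdvd : (2:ℕ) ∣ (m * 2^(k-n) - 1) * 2^(j-k) :=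
    Dvd.dvd.mul_left (dvd_pow_self 2 (by omega)) _
  omega

end digits

lemma gap (m n k : ℕ) (hm : m % 2 = 1) (h1 : m < 2^n) (hnk : n < k) :
    (1/4:ℝ)^n ≤ interleaveZeros ((m:ℝ)/2^n) - interleaveZeros ((m:ℝ)/2^n - 1/2^k) := by
  have hn1 : 1 ≤ n := by
    by_contra h
    have hn0 : n = 0 := by omega
    rw [hn0] at h1; simp at h1; omega
  have hMpos : 1 ≤ m * 2^(k-n) := Nat.mul_pos (by omega) (by positivity)
  have hy : (m:ℝ)/2^n - 1/2^k = ((m * 2^(k-n) - 1 : ℕ):ℝ)/2^k := by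
    have hc : ((m * 2^(k-n) - 1 : ℕ):ℝ) = (m:ℝ) * 2^(k-n) - 1 := by
      push_cast [hMpos]; ring
    have h2k : (2:ℝ)^k = 2^(k-n) * 2^n := by rw [← pow_add]; congr 1; omega
    rw [hc, h2k]
    field_simp
  rw [hy]
  set fx := fun i : ℕ => (binDigit ((m:ℝ)/2^n) (i+1) : ℝ)/2^(2*i+1) with hfx
  set fy := fun i : ℕ => (binDigit (((m * 2^(k-n) - 1 : ℕ):ℝ)/2^k) (i+1) : ℝ)/2^(2*i+1) with hfy
  set A := fun i : ℕ => if i = n-1 then (1:ℝ)/2^(2*i+1) else 0 with hA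
  set B := fun i : ℕ => if i ∈ Finset.Ico n k then (1:ℝ)/2^(2*i+1) else 0 with hB
  have hpt : ∀ i : ℕ, fx i - fy i = A i - B i := by
    intro i
    simp only [hfx, hfy, hA, hB]
    rcases lt_trichotomy (i+1) n with h|h|h
    · rw [dx_lt m n _ h, dy_lt m n k hm hnk _ h]
      have hne : ¬ (i = n-1) := by omega
      have hni : i ∉ Finset.Ico n k := by simp only [Finset.mem_Ico]; omega
      simp [hne, hni]
    · have hieq : i = n - 1 := by omega
      rw [h, dx_eqn m n hm, dy_eqn m n k hm hnk]
      simp [hieq, show ¬(n ≤ n-1 ∧ n-1 < k) from by omega]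
    · rcases le_or_gt (i+1) k with h2|h2
      · rw [dx_gt m n _ h, dy_mid m n k hm _ h h2]
        have hne : ¬ (i = n-1) := by omega
        have hni : i ∈ Finset.Ico n k := by simp only [Finset.mem_Ico]; omega
        simp [hne, hni]
      · rw [dx_gt m n _ h, dy_gt m n k _ h2]
        have hne : ¬ (i = n-1) := by omega
        have hni : i ∉ Finset.Ico n k := by simp only [Finset.mem_Ico]; omega
        simp [hne, hni]
  have hsA : Summable A :=
    summable_of_ne_finset_zero (s := {n-1})
      (fun i hi => by simp only [hA]; rw [if_neg (by simpa using hi)])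
  have hsB : Summable B :=
    summable_of_ne_finset_zero (s := Finset.Ico n k)
      (fun i hi => by simp only [hB]; rw [if_neg hi])
  have hdiff : interleaveZeros ((m:ℝ)/2^n) - interleaveZeros (((m * 2^(k-n) - 1 : ℕ):ℝ)/2^k)
      = (∑' i, A i) - (∑' i, B i) := by
    rw [show interleaveZeros ((m:ℝ)/2^n) = ∑' i, fx i from rfl,
      show interleaveZeros (((m * 2^(k-n) - 1 : ℕ):ℝ)/2^k) = ∑' i, fy i from rfl,
      ← Summable.tsum_sub (summable_digits _) (summable_digits _),
      tsum_congr hpt, Summable.tsum_sub hsA hsB]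
  rw [hdiff]
  have htA : (∑' i, A i) = (1:ℝ)/2^(2*(n-1)+1) := by
    simp only [hA]
    rw [tsum_eq_single (n-1) (fun i hi => by rw [if_neg hi]), if_pos rfl]
  have htA2 : (∑' i, A i) = 2 * (1/4:ℝ)^n := by
    rw [htA, term_eq]
    have h4 : (1/4:ℝ)^n = (1/4)^(n-1) * (1/4) := by
      rw [← pow_succ]; congr 1; omega
    rw [h4]; ring
  have htB : (∑' i, B i) = ∑ i ∈ Finset.Ico n k, (1:ℝ)/2^(2*i+1) := by
    rw [tsum_eq_sum (s := Finset.Ico n k) (fun i hi => by rw [hB]; simp [hi])]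
    exact Finset.sum_congr rfl (fun i hi => by rw [hB]; simp [hi])
  have htB2 : (∑' i, B i) ≤ (2/3) * (1/4:ℝ)^n := by
    rw [htB]
    have : ∀ i ∈ Finset.Ico n k, (1:ℝ)/2^(2*i+1) = (1/2)*(1/4)^i :=
      fun i _ => term_eq i
    rw [Finset.sum_congr rfl this, ← Finset.mul_sum,
      geom_sum_Ico (by norm_num : (1/4:ℝ) ≠ 1) (le_of_lt hnk)]
    have hk4 : (0:ℝ) ≤ (1/4)^k := by positivity
    have hdv : ((1/4:ℝ)^k - (1/4)^n)/(1/4 - 1) = (4/3)*((1/4)^n - (1/4)^k) := by ring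
    rw [hdv]
    linarith
  rw [htA2]
  have hp : (0:ℝ) < (1/4:ℝ)^n := by positivity
  linarith [htB2, hp]

lemma discont_odd (m n : ℕ) (hm : m % 2 = 1) (h1 : m < 2^n) :
    ¬ ContinuousWithinAt interleaveZeros (Set.Ioo (0:ℝ) 1) ((m:ℝ)/2^n) := by
  intro hc
  set x := (m:ℝ)/2^n with hx
  have hm0 : 0 < m := by omega
  have hx0 : 0 < x := div_pos (by exact_mod_cast hm0) (by positivity)
  have hx1 : x < 1 := by
    rw [hx, div_lt_one (by positivity)]
    exact_mod_cast h1
  have htend0 : Filter.Tendsto (fun k : ℕ => (1/2:ℝ)^k) Filter.atTop (nhds 0) :=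
    tendsto_pow_atTop_nhds_zero_of_lt_one (by norm_num) (by norm_num)
  have hod : ∀ k : ℕ, (1/2:ℝ)^k = 1/2^k := fun k => one_div_pow 2 k
  have hyx : Filter.Tendsto (fun k : ℕ => x - 1/2^k) Filter.atTop (nhds x) := by
    have heq : (fun k : ℕ => x - 1/2^k) = fun k => x - (1/2)^k := by
      funext k; rw [hod]
    rw [heq]
    simpa using tendsto_const_nhds.sub htend0
  have h2 : ∀ᶠ k : ℕ in Filter.atTop, (1/2:ℝ)^k < x :=
    htend0.eventually_lt_const hx0
  have hev : ∀ᶠ k : ℕ in Filter.atTop, (x - 1/2^k) ∈ Set.Ioo (0:ℝ) 1 := by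
    filter_upwards [h2] with k hk
    have hk' : (1:ℝ)/2^k < x := by rw [← hod]; exact hk
    have hkpos : (0:ℝ) < 1/2^k := by positivity
    exact ⟨by linarith, by linarith⟩
  have htendin : Filter.Tendsto (fun k : ℕ => x - 1/2^k) Filter.atTop
      (nhdsWithin x (Set.Ioo 0 1)) :=
    tendsto_nhdsWithin_iff.2 ⟨hyx, hev⟩
  have hgt : Filter.Tendsto (fun k : ℕ => interleaveZeros (x - 1/2^k)) Filter.atTop
      (nhds (interleaveZeros x)) := hc.tendsto.comp htendin
  have heps : ∀ᶠ k : ℕ in Filter.atTop,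
      dist (interleaveZeros (x - 1/2^k)) (interleaveZeros x) < (1/4)^n :=
    hgt.eventually (Metric.ball_mem_nhds _ (by positivity))
  have hgap : ∀ᶠ k : ℕ in Filter.atTop,
      (1/4:ℝ)^n ≤ interleaveZeros x - interleaveZeros (x - 1/2^k) := by
    filter_upwards [Filter.eventually_gt_atTop n] with k hk
    exact gap m n k hm h1 hk
  obtain ⟨k, h5, h6⟩ := (heps.and hgap).exists
  rw [Real.dist_eq] at h5
  have h7 := abs_lt.mp h5
  linarith [h7.1, h7.2, h6]

lemma dyadic_repr : ∀ n m : ℕ, 0 < m → m < 2^n →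
    ∃ m' n' : ℕ, m' % 2 = 1 ∧ m' < 2^n' ∧ (m:ℝ)/2^n = (m':ℝ)/2^n' := by
  intro n
  induction n with
  | zero => intro m h0 h1; simp at h1; omega
  | succ n ih =>
    intro m h0 h1
    rcases Nat.even_or_odd m with he|ho
    · obtain ⟨c, hc⟩ := he
      have hps : (2:ℕ)^(n+1) = 2 * 2^n := by rw [pow_succ]; ring
      have hc0 : 0 < c := by omega
      have hc1 : c < 2^n := by omega
      obtain ⟨m', n', hm', h1', heq⟩ := ih c hc0 hc1
      refine ⟨m', n', hm', h1', ?_⟩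
      rw [← heq, hc]
      push_cast
      rw [pow_succ]
      field_simp
      ring
    · exact ⟨m, n+1, Nat.odd_iff.mp ho, h1, rfl⟩


/-- `g` is discontinuous (within `(0,1)`) at every dyadic rational `m / 2^n` with
`0 < m < 2^n`; in particular, the set of discontinuities of `g` is dense in `(0,1)`. -/
theorem interleaveZeros_discontinuous_on_dense_set :
    (∀ m n : ℕ, 0 < m → m < 2 ^ n →
      ¬ ContinuousWithinAt interleaveZeros (Set.Ioo (0 : ℝ) 1) ((m : ℝ) / 2 ^ n)) ∧
    (∀ x ∈ Set.Ioo (0 : ℝ) 1,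
      x ∈ closure {y ∈ Set.Ioo (0 : ℝ) 1 |
        ¬ ContinuousWithinAt interleaveZeros (Set.Ioo (0 : ℝ) 1) y}) := by
  have part1 : ∀ m n : ℕ, 0 < m → m < 2 ^ n →
      ¬ ContinuousWithinAt interleaveZeros (Set.Ioo (0 : ℝ) 1) ((m : ℝ) / 2 ^ n) := by
    intro m n h0 h1
    obtain ⟨m', n', hm', h1', heq⟩ := dyadic_repr n m h0 h1
    rw [heq]
    exact discont_odd m' n' hm' h1'
  refine ⟨part1, ?_⟩
  intro x hx
  obtain ⟨hx0, hx1⟩ := hx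
  set z : ℕ → ℝ := fun j => ((⌊x * 2^j⌋₊ + 1 : ℕ):ℝ)/2^j with hz
  have hzlow : ∀ j, x < z j := by
    intro j
    rw [hz]
    rw [lt_div_iff₀ (by positivity)]
    push_cast
    exact Nat.lt_floor_add_one (x * 2^j)
  have hzhigh : ∀ j, z j ≤ x + (1/2:ℝ)^j := by
    intro j
    rw [hz, div_le_iff₀ (by positivity)]
    push_cast
    have := Nat.floor_le (by positivity : (0:ℝ) ≤ x * 2^j)
    have h2 : (x + (1/2:ℝ)^j) * 2^j = x * 2^j + 1 := by
      rw [add_mul, one_div_pow, div_mul_cancel₀]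
      positivity
    rw [h2]
    linarith
  have htend0 : Filter.Tendsto (fun j : ℕ => (1/2:ℝ)^j) Filter.atTop (nhds 0) :=
    tendsto_pow_atTop_nhds_zero_of_lt_one (by norm_num) (by norm_num)
  have hztend : Filter.Tendsto z Filter.atTop (nhds x) := by
    apply tendsto_of_tendsto_of_tendsto_of_le_of_le
      (tendsto_const_nhds : Filter.Tendsto (fun _ : ℕ => x) Filter.atTop (nhds x))
      (by simpa using (tendsto_const_nhds.add htend0 :
        Filter.Tendsto (fun j : ℕ => x + (1/2:ℝ)^j) Filter.atTop (nhds (x + 0))))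
      (fun j => le_of_lt (hzlow j)) hzhigh
  have hevsmall : ∀ᶠ j : ℕ in Filter.atTop, (1/2:ℝ)^j < 1 - x :=
    htend0.eventually_lt_const (by linarith)
  apply mem_closure_of_tendsto hztend
  filter_upwards [hevsmall] with j hj
  have hmlt : ⌊x * 2^j⌋₊ + 1 < 2^j := by
    have hfl := Nat.floor_le (by positivity : (0:ℝ) ≤ x * 2^j)
    have hlt : (↑(⌊x * 2^j⌋₊ + 1) : ℝ) < 2^j := by
      push_cast
      have : x * 2^j + 1 < 2^j := by
        have h2 : ((1:ℝ)/2)^j * 2^j = 1 := by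
          rw [one_div_pow, div_mul_cancel₀]; positivity
        nlinarith [hj, (by positivity : (0:ℝ) < (2:ℝ)^j)]
      linarith
    have : ((⌊x * 2^j⌋₊ + 1 : ℕ) : ℝ) < ((2^j : ℕ) : ℝ) := by push_cast at hlt ⊢; linarith
    exact_mod_cast this
  have hzIoo : z j ∈ Set.Ioo (0:ℝ) 1 := by
    constructor
    · exact lt_trans hx0 (hzlow j)
    · rw [hz, div_lt_one (by positivity)]
      have : ((⌊x * 2^j⌋₊ + 1 : ℕ) : ℝ) < ((2^j : ℕ) : ℝ) := by exact_mod_cast hmlt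
      push_cast at this ⊢
      linarith
  refine ⟨hzIoo, ?_⟩
  have := part1 (⌊x * 2^j⌋₊ + 1) j (by omega) hmlt
  exact this
end

section
/- Let x = 0.b₁b₂…b_m be a number with finite binary expansion of length m in (0,1), and let g be the digit-interleaving function g(x) = 0.b₁0b₂0…0b_m. Let x_i = x − 2^{−m−i}. Then lim_{i→∞} g(x_i) = g(x − 2^{−m}) + 1/(3·2^{2m−1}), which differs from g(x); hence g(lim x_i) ≠ lim g(x_i). -/
lemma binDigit_dyadic (k N i : ℕ) :
    binDigit ((k : ℝ) / 2 ^ N) i = k * 2 ^ i / 2 ^ N % 2 := by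
  unfold binDigit
  have h1 : ((k : ℝ) / 2 ^ N) * 2 ^ i = ((k * 2 ^ i : ℕ) : ℝ) / ((2 ^ N : ℕ) : ℝ) := by
    push_cast; ring
  rw [h1, Int.floor_toNat, Nat.floor_div_natCast, Nat.floor_natCast]

noncomputable def gfin (k N : ℕ) : ℝ :=
  ∑ t ∈ Finset.range N, ((k / 2 ^ (N - (t + 1)) % 2 : ℕ) : ℝ) / 2 ^ (2 * t + 1)

lemma interleave_dyadic (k N : ℕ) :
    interleaveZeros ((k : ℝ) / 2 ^ N) = gfin k N := by
  unfold interleaveZeros gfin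
  rw [tsum_eq_sum (s := Finset.range N)]
  · apply Finset.sum_congr rfl
    intro t ht
    rw [Finset.mem_range] at ht
    rw [binDigit_dyadic]
    congr 2
    have h : 2 ^ N = 2 ^ (t + 1) * 2 ^ (N - (t + 1)) := by
      rw [← pow_add]; congr 1; omega
    rw [h, ← Nat.div_div_eq_div_mul, Nat.mul_div_cancel _ (by positivity)]
  · intro t ht
    rw [Finset.mem_range] at ht
    rw [binDigit_dyadic]
    have h : k * 2 ^ (t + 1) / 2 ^ N = k * 2 ^ (t + 1 - N) := by
      have : (2:ℕ) ^ (t+1) = 2 ^ N * 2 ^ (t + 1 - N) := by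
        rw [← pow_add]; congr 1; omega
      rw [this, ← mul_assoc, mul_right_comm, Nat.mul_div_cancel _ (by positivity)]
    rw [h]
    have hd : 2 ∣ k * 2 ^ (t + 1 - N) :=
      Dvd.dvd.mul_left (dvd_pow_self 2 (by omega)) k
    have h0 : k * 2 ^ (t + 1 - N) % 2 = 0 := by omega
    simp [h0]

lemma pred_mul_div (n A : ℕ) (hn : 1 ≤ n) (hA : 1 ≤ A) : (n * A - 1) / A = n - 1 := by
  apply Nat.div_eq_of_lt_le
  · rw [Nat.sub_mul, one_mul]
    have hA' : A ≤ n * A := Nat.le_mul_of_pos_left A hn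
    omega
  · rw [Nat.sub_add_cancel hn]
    have h1 : 1 ≤ n * A := Nat.mul_pos hn hA
    omega

lemma gfin_shift (n m i : ℕ) (hn : 1 ≤ n) :
    gfin (n * 2 ^ i - 1) (m + i) =
      gfin (n - 1) m + ∑ t ∈ Finset.Ico m (m + i), (1:ℝ) / 2 ^ (2 * t + 1) := by
  unfold gfin
  rw [Finset.range_eq_Ico, ← Finset.sum_Ico_consecutive _ (Nat.zero_le m) (by omega : m ≤ m + i)]
  congr 1
  · rw [← Finset.range_eq_Ico]
    apply Finset.sum_congr rfl
    intro t ht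
    rw [Finset.mem_range] at ht
    congr 3
    have he : 2 ^ (m + i - (t + 1)) = 2 ^ i * 2 ^ (m - (t + 1)) := by
      rw [← pow_add]; congr 1; omega
    rw [he, ← Nat.div_div_eq_div_mul, pred_mul_div n (2 ^ i) hn (Nat.two_pow_pos i)]
  · apply Finset.sum_congr rfl
    intro t ht
    rw [Finset.mem_Ico] at ht
    have he : (2:ℕ) ^ i = 2 ^ (i - (m + i - (t + 1))) * 2 ^ (m + i - (t + 1)) := by
      rw [← pow_add]; congr 1; omega
    have h1 : n * 2 ^ i - 1 = n * 2 ^ (i - (m + i - (t + 1))) * 2 ^ (m + i - (t + 1)) - 1 := by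
      rw [he, mul_assoc]
    rw [h1, pred_mul_div _ _ (Nat.mul_pos hn (Nat.two_pow_pos _)) (Nat.two_pow_pos _)]
    have hd : 2 ∣ n * 2 ^ (i - (m + i - (t + 1))) :=
      Dvd.dvd.mul_left (dvd_pow_self 2 (by omega)) n
    have hge : 2 ≤ n * 2 ^ (i - (m + i - (t + 1))) := by
      calc 2 = 1 * 2 ^ 1 := by norm_num
      _ ≤ n * 2 ^ (i - (m + i - (t + 1))) := by
          apply Nat.mul_le_mul hn
          apply Nat.pow_le_pow_right (by norm_num)
          omega
    have : (n * 2 ^ (i - (m + i - (t + 1))) - 1) % 2 = 1 := by omega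
    rw [this]
    norm_num

lemma gfin_eq_nat_div (k N : ℕ) (hN : 1 ≤ N) :
    ∃ A : ℕ, gfin k N = (A : ℝ) / 2 ^ (2 * N - 1) := by
  refine ⟨∑ t ∈ Finset.range N, (k / 2 ^ (N - (t + 1)) % 2) * 2 ^ (2 * (N - 1 - t)), ?_⟩
  unfold gfin
  push_cast
  rw [Finset.sum_div]
  apply Finset.sum_congr rfl
  intro t ht
  rw [Finset.mem_range] at ht
  have he : (2:ℝ) ^ (2 * N - 1) = 2 ^ (2 * (N - 1 - t)) * 2 ^ (2 * t + 1) := by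
    rw [← pow_add]; congr 1; omega
  rw [he, mul_comm ((k / 2 ^ (N - (t + 1)) % 2 : ℕ) : ℝ), mul_div_mul_left _ _ (by positivity)]


open Filter in
lemma geom_tail (m : ℕ) (hm : 0 < m) :
    Tendsto (fun i : ℕ => ∑ t ∈ Finset.Ico m (m + i), (1:ℝ) / 2 ^ (2 * t + 1)) atTop
      (nhds (1 / (3 * 2 ^ (2 * m - 1)))) := by
  set f : ℕ → ℝ := fun t => (1/2) * (1/4) ^ t with hf
  have hterm : ∀ t : ℕ, (1:ℝ) / 2 ^ (2 * t + 1) = f t := by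
    intro t
    simp only [hf]
    have h4 : ((1:ℝ)/4) ^ t = 1 / 4 ^ t := by rw [div_pow, one_pow]
    rw [h4, show (2:ℝ) ^ (2*t+1) = 2 * 4 ^ t by rw [pow_add, pow_mul]; ring_nf,
      div_mul_div_comm, one_mul]
  have hgeo : HasSum f (2/3) := by
    have h := (hasSum_geometric_of_lt_one (by norm_num : (0:ℝ) ≤ 1/4)
      (by norm_num : (1:ℝ)/4 < 1)).mul_left (1/2)
    have hv : (1/2:ℝ) * (1 - 1/4)⁻¹ = 2/3 := by norm_num
    rwa [hv] at h
  have hP := hgeo.tendsto_sum_nat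
  have hcomp : Tendsto (fun i : ℕ => ∑ t ∈ Finset.range (m + i), f t) atTop (nhds (2/3)) := by
    have := hP.comp (tendsto_add_atTop_nat m)
    simpa [Function.comp_def, Nat.add_comm] using this
  have hS : ∀ i : ℕ, ∑ t ∈ Finset.Ico m (m + i), (1:ℝ) / 2 ^ (2 * t + 1)
      = (∑ t ∈ Finset.range (m + i), f t) - ∑ t ∈ Finset.range m, f t := by
    intro i
    rw [Finset.range_eq_Ico,
      ← Finset.sum_Ico_consecutive f (Nat.zero_le m) (by omega : m ≤ m + i)]
    rw [← Finset.range_eq_Ico]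
    simp only [add_sub_cancel_left]
    exact Finset.sum_congr rfl fun t _ => hterm t
  have hlim : Tendsto (fun i : ℕ =>
      (∑ t ∈ Finset.range (m + i), f t) - ∑ t ∈ Finset.range m, f t) atTop
      (nhds (2/3 - ∑ t ∈ Finset.range m, f t)) := hcomp.sub_const _
  have hval : 2/3 - (∑ t ∈ Finset.range m, f t) = 1 / (3 * 2 ^ (2 * m - 1)) := by
    have hPm : (∑ t ∈ Finset.range m, f t) = 2/3 * (1 - (1/4) ^ m) := by
      rw [hf, ← Finset.mul_sum, geom_sum_eq (by norm_num : (1:ℝ)/4 ≠ 1)]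
      ring
    rw [hPm]
    have h2 : (2:ℝ) ^ (2 * m - 1) * 2 = 4 ^ m := by
      rw [← pow_succ, Nat.sub_add_cancel (by omega), pow_mul]; norm_num
    have h4 : (0:ℝ) < 4 ^ m := by positivity
    field_simp
    have h5 : ((1:ℝ)/4) ^ m * 4 ^ m = 1 := by rw [← mul_pow]; norm_num
    linear_combination ((1:ℝ)/4) ^ m * h2 + h5
  rw [← hval]
  have : (fun i : ℕ => ∑ t ∈ Finset.Ico m (m + i), (1:ℝ) / 2 ^ (2 * t + 1))
      = fun i : ℕ => (∑ t ∈ Finset.range (m + i), f t) - ∑ t ∈ Finset.range m, f t :=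
    funext hS
  rw [this]
  exact hlim

open Filter in
/-- If `x = 0.b₁…b_m` has a finite binary expansion of length `m` and
`x_i = x - 2^{-m-i}`, then `lim g(x_i) = g(x - 2^{-m}) + 1/(3·2^{2m-1}) ≠ g(x)`;
hence `g(lim x_i) ≠ lim g(x_i)`. -/
theorem interleaveZeros_not_continuous_at_finite_expansion
    (m : ℕ) (hm : 0 < m) (x : ℝ) (hx : x ∈ Set.Ioo (0 : ℝ) 1)
    (hfin : ∀ i > m, binDigit x i = 0) :
    Tendsto (fun i : ℕ => interleaveZeros (x - 1 / 2 ^ (m + i))) atTop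
      (nhds (interleaveZeros (x - 1 / 2 ^ m) + 1 / (3 * 2 ^ (2 * m - 1)))) ∧
    interleaveZeros (x - 1 / 2 ^ m) + 1 / (3 * 2 ^ (2 * m - 1)) ≠ interleaveZeros x := by
  obtain ⟨hx0, hx1⟩ := hx
  -- x is dyadic : x = n / 2 ^ m
  set nZ : ℤ := ⌊x * 2 ^ m⌋ with hnZ
  have hstep : ∀ k, m ≤ k → ⌊x * 2 ^ (k + 1)⌋ = 2 * ⌊x * 2 ^ k⌋ := by
    intro k hk
    have hpar := hfin (k + 1) (by omega)
    unfold binDigit at hpar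
    have h1 : 2 * ⌊x * 2 ^ k⌋ ≤ ⌊x * 2 ^ (k + 1)⌋ := by
      rw [Int.le_floor]
      push_cast
      rw [pow_succ]
      nlinarith [Int.floor_le (x * 2 ^ k)]
    have h2 : ⌊x * 2 ^ (k + 1)⌋ < 2 * ⌊x * 2 ^ k⌋ + 2 := by
      rw [Int.floor_lt]
      push_cast
      rw [pow_succ]
      nlinarith [Int.lt_floor_add_one (x * 2 ^ k)]
    have hnn : 0 ≤ ⌊x * 2 ^ (k + 1)⌋ :=
      Int.floor_nonneg.2 (mul_nonneg hx0.le (by positivity))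
    omega
  have hind : ∀ j : ℕ, ⌊x * 2 ^ (m + j)⌋ = 2 ^ j * nZ := by
    intro j
    induction j with
    | zero => simp [hnZ]
    | succ j ih =>
      rw [show m + (j + 1) = (m + j) + 1 by omega, hstep (m + j) (by omega), ih]
      ring
  have hge : (nZ : ℝ) / 2 ^ m ≤ x := by
    rw [div_le_iff₀ (by positivity)]
    exact Int.floor_le (x * 2 ^ m)
  have hlt : ∀ j : ℕ, x - (nZ : ℝ) / 2 ^ m < 1 / 2 ^ (m + j) := by
    intro j
    have h := Int.lt_floor_add_one (x * 2 ^ (m + j))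
    rw [hind j] at h
    push_cast at h
    have hkey : x - (nZ : ℝ) / 2 ^ m = (x * 2 ^ (m + j) - 2 ^ j * nZ) / 2 ^ (m + j) := by
      rw [pow_add]
      field_simp
    rw [hkey]
    gcongr
    linarith
  have hxval : x = (nZ : ℝ) / 2 ^ m := by
    by_contra hne
    have hδ : 0 < x - (nZ : ℝ) / 2 ^ m := by
      rcases lt_or_eq_of_le hge with h | h
      · linarith
      · exact absurd h.symm hne
    obtain ⟨j, hj⟩ := exists_pow_lt_of_lt_one hδ (by norm_num : (1:ℝ)/2 < 1)
    have h1 : (1:ℝ) / 2 ^ (m + j) ≤ (1/2) ^ j := by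
      rw [div_pow, one_pow]
      apply div_le_div_of_nonneg_left (by norm_num) (by positivity)
      exact pow_le_pow_right₀ (by norm_num) (by omega)
    linarith [hlt j]
  have hnZpos : 0 < nZ := by
    have h2 : (0:ℝ) < 2 ^ m := by positivity
    have hpos : (0:ℝ) < (nZ : ℝ) / 2 ^ m * 2 ^ m :=
      mul_pos (by rw [← hxval]; exact hx0) h2
    rw [div_mul_cancel₀ _ (ne_of_gt h2)] at hpos
    exact_mod_cast hpos
  set n : ℕ := nZ.toNat with hn
  have hncast : (n : ℝ) = (nZ : ℝ) := by
    rw [hn]; exact_mod_cast Int.toNat_of_nonneg hnZpos.le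
  have hn1 : 1 ≤ n := by omega
  have hxn : x = (n : ℝ) / 2 ^ m := by rw [hncast]; exact hxval
  -- rewrite the sequence
  have hrw : ∀ i : ℕ, x - 1 / 2 ^ (m + i)
      = ((n * 2 ^ i - 1 : ℕ) : ℝ) / 2 ^ (m + i) := by
    intro i
    have h1 : 1 ≤ n * 2 ^ i := Nat.mul_pos hn1 (Nat.two_pow_pos i)
    rw [hxn]
    push_cast [Nat.cast_sub h1]
    rw [pow_add]
    field_simp
  have hiz : ∀ i : ℕ, interleaveZeros (x - 1 / 2 ^ (m + i))
      = gfin (n - 1) m + ∑ t ∈ Finset.Ico m (m + i), (1:ℝ) / 2 ^ (2 * t + 1) := by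
    intro i
    rw [hrw i, interleave_dyadic, gfin_shift n m i hn1]
  have hiz0 : interleaveZeros (x - 1 / 2 ^ m) = gfin (n - 1) m := by
    have := hiz 0
    simpa using this
  constructor
  · rw [hiz0]
    have := (geom_tail m hm).const_add (gfin (n - 1) m)
    refine this.congr ?_
    intro i
    rw [hiz i]
  · rw [hiz0]
    have hx_eq : interleaveZeros x = gfin n m := by
      rw [hxn, interleave_dyadic]
    rw [hx_eq]
    obtain ⟨A, hA⟩ := gfin_eq_nat_div n m hm
    obtain ⟨B, hB⟩ := gfin_eq_nat_div (n - 1) m hm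
    rw [hA, hB]
    intro hcontra
    have hp : (0:ℝ) < 2 ^ (2 * m - 1) := by positivity
    have hp' : (2:ℝ) ^ (2 * m - 1) ≠ 0 := ne_of_gt hp
    have he : 1 / (3 * (2:ℝ) ^ (2 * m - 1)) = (1/3) / 2 ^ (2 * m - 1) := by
      rw [div_div]
    rw [he, ← add_div] at hcontra
    have hkey := congrArg (· * (2:ℝ) ^ (2 * m - 1)) hcontra
    simp only [div_mul_cancel₀ _ hp'] at hkey
    have h3 : (3:ℝ) * B + 1 = 3 * A := by linarith
    have h3' : 3 * B + 1 = 3 * A := by exact_mod_cast h3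
    omega
end
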